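/- (Lemma 4.4, even case) For every even n = 2m with n ≥ 4, the characteristic polynomial of B_n has the explicit representation det(λI − B_n) = Σ_{k=1}^{⌊(n+3)/4⌋+2} (−1)^{k−1} · ( C(n/2 − k + 2, k−1) + C(n/2 − k + 2, k−2) · λ ) · λ^{n−2k+3}, where C(a,b) denotes the binomial coefficient (with C(a,b) = 0 for b < 0 or b > a) and any term with a negative exponent of λ has vanishing coefficient. -/

import Mathlib

/-- Adjacency matrix of the composability digraph of the `n` first-order
differential operations `∇_1, …, ∇_n` on `ℝⁿ` (index `i : Fin n` represents
the operation `∇_{i+1}`): there is an edge `i → j` iff `j = i + 1` or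
`i + j = n + 1` (in the 1-based indexing of the paper). -/
def adjA (n : ℕ) : Matrix (Fin n) (Fin n) ℤ :=
  Matrix.of fun i j =>
    if (j : ℕ) = (i : ℕ) + 1 ∨ (i : ℕ) + (j : ℕ) + 2 = n + 1 then 1 else 0

/-- `fCount n k` is the number of meaningful `k`-th order compositions of the
differential operations on `ℝⁿ`, i.e. the number of sequences
`(i_1, …, i_k) ∈ {1, …, n}^k` each consecutive pair of which is composable. -/
def fCount (n k : ℕ) : ℕ :=
  (Finset.univ.filter fun s : Fin k → Fin n =>
    ∀ i j : Fin k, (j : ℕ) = (i : ℕ) + 1 → adjA n (s i) (s j) = 1).card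

/-- Adjacency matrix of the composability digraph of the Gateaux directional
derivative `∇_0` together with the `n` first-order differential operations
`∇_1, …, ∇_n` on `ℝⁿ` (index `i : Fin (n+1)` represents `∇_i`): there is an
edge `i → j` iff `(i = 0 ∧ j = 0)` or `(i = n ∧ j = 0)` or `j = i + 1` or
`i + j = n + 1`. -/
def adjB (n : ℕ) : Matrix (Fin (n + 1)) (Fin (n + 1)) ℤ :=
  Matrix.of fun i j =>
    if ((i : ℕ) = 0 ∧ (j : ℕ) = 0) ∨ ((i : ℕ) = n ∧ (j : ℕ) = 0) ∨
        (j : ℕ) = (i : ℕ) + 1 ∨ (i : ℕ) + (j : ℕ) = n + 1 then 1 else 0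

/-- `gCount n k` is the number of meaningful `k`-th order compositions of the
differential operations together with the Gateaux directional derivative on
`ℝⁿ`, i.e. the number of sequences `(i_1, …, i_k) ∈ {0, 1, …, n}^k` each
consecutive pair of which is composable. -/
def gCount (n k : ℕ) : ℕ :=
  (Finset.univ.filter fun s : Fin k → Fin (n + 1) =>
    ∀ i j : Fin k, (j : ℕ) = (i : ℕ) + 1 → adjB n (s i) (s j) = 1).card

open Polynomial Matrix Finset

set_option linter.unreachableTactic false
set_option linter.unusedTactic false
set_option maxHeartbeats 1000000

lemma ev_neg_one {P Q : Prop} [Decidable P] [Decidable Q] (hP : ¬P) (hQ : Q) :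
    (if P then (X : Polynomial ℤ) else 0) - (if Q then 1 else 0) = -1 := by
  rw [if_neg hP, if_pos hQ]; ring
lemma ev_zero {P Q : Prop} [Decidable P] [Decidable Q] (hP : ¬P) (hQ : ¬Q) :
    (if P then (X : Polynomial ℤ) else 0) - (if Q then 1 else 0) = 0 := by
  rw [if_neg hP, if_neg hQ]; ring
lemma ev_X {P Q : Prop} [Decidable P] [Decidable Q] (hP : P) (hQ : ¬Q) :
    (if P then (X : Polynomial ℤ) else 0) - (if Q then 1 else 0) = X := by
  rw [if_pos hP, if_neg hQ]; ring
lemma ev_X_sub_one {P Q : Prop} [Decidable P] [Decidable Q] (hP : P) (hQ : Q) :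
    (if P then (X : Polynomial ℤ) else 0) - (if Q then 1 else 0) = X - 1 := by
  rw [if_pos hP, if_pos hQ]

noncomputable def bM (n : ℕ) : Matrix (Fin (n+1)) (Fin (n+1)) (Polynomial ℤ) :=
  Matrix.of fun i j =>
    (if (i:ℕ) = (j:ℕ) then X else 0) -
      (if ((i : ℕ) = 0 ∧ (j : ℕ) = 0) ∨ ((i : ℕ) = n ∧ (j : ℕ) = 0) ∨
        (j : ℕ) = (i : ℕ) + 1 ∨ (i : ℕ) + (j : ℕ) = n + 1 then 1 else 0)

noncomputable def aM (n : ℕ) : Matrix (Fin n) (Fin n) (Polynomial ℤ) :=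
  Matrix.of fun i j =>
    (if (i:ℕ) = (j:ℕ) then X else 0) -
      (if (j : ℕ) = (i : ℕ) + 1 ∨ (i : ℕ) + (j : ℕ) + 2 = n + 1 then 1 else 0)

noncomputable def tM (z : ℕ) : Matrix (Fin z) (Fin z) (Polynomial ℤ) :=
  Matrix.of fun r c =>
    (if (r:ℕ) = (c:ℕ) + 1 then X else 0) -
      (if (r:ℕ) = (c:ℕ) ∨ (r:ℕ) + (c:ℕ) + 1 = z then 1 else 0)

noncomputable def uM (z : ℕ) : Matrix (Fin z) (Fin z) (Polynomial ℤ) :=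
  Matrix.of fun r c =>
    (if (r:ℕ) = (c:ℕ) + 1 then X else 0) -
      (if (r:ℕ) = (c:ℕ) ∨ (r:ℕ) + (c:ℕ) + 2 = z then 1 else 0)

noncomputable def vM (z : ℕ) : Matrix (Fin z) (Fin z) (Polynomial ℤ) :=
  Matrix.of fun r c =>
    (if (r:ℕ) = (c:ℕ) + 1 then X else 0) -
      (if (r:ℕ) = (c:ℕ) ∨ (r:ℕ) + (c:ℕ) = z then 1 else 0)

noncomputable def rM (z : ℕ) : Matrix (Fin z) (Fin z) (Polynomial ℤ) :=
  Matrix.of fun r c =>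
    (if (r:ℕ) = (c:ℕ) then X else 0) -
      (if (c:ℕ) = (r:ℕ) + 1 ∨ (r:ℕ) + (c:ℕ) + 2 = z then 1 else 0)

lemma charmatrix_adjB (n : ℕ) : charmatrix (adjB n) = bM n := by
  refine Matrix.ext fun i j => ?_
  simp only [charmatrix_apply, Matrix.diagonal_apply, adjB, bM, Matrix.of_apply,
    apply_ite (C : ℤ → Polynomial ℤ), Polynomial.C_1, Polynomial.C_0, Fin.ext_iff]

lemma charmatrix_adjA (n : ℕ) : charmatrix (adjA n) = aM n := by
  refine Matrix.ext fun i j => ?_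
  simp only [charmatrix_apply, Matrix.diagonal_apply, adjA, aM, Matrix.of_apply,
    apply_ite (C : ℤ → Polynomial ℤ), Polynomial.C_1, Polynomial.C_0, Fin.ext_iff]

section Ext
-- helper: all ext proofs are congruence of the two ifs
private def extTac := 0

lemma sub_bM (n : ℕ) : (bM n).submatrix Fin.succ Fin.succ = aM n := by
  refine Matrix.ext fun r c => ?_
  have hr := r.isLt; have hc := c.isLt
  simp only [bM, aM, submatrix_apply, Matrix.of_apply, Fin.val_succ]
  all_goals first
  | rfl
  | exact congrArg₂ (· - ·) (if_congr (by omega) rfl rfl) (if_congr (by omega) rfl rfl)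

lemma sub_bM' (n : ℕ) : (bM n).submatrix Fin.castSucc Fin.succ = vM n := by
  refine Matrix.ext fun r c => ?_
  have hr := r.isLt; have hc := c.isLt
  simp only [bM, vM, submatrix_apply, Matrix.of_apply, Fin.val_succ, Fin.coe_castSucc]
  all_goals first
  | rfl
  | exact congrArg₂ (· - ·) (if_congr (by omega) rfl rfl) (if_congr (by omega) rfl rfl)

lemma sub_vM (z : ℕ) : (vM (z+1)).submatrix Fin.succ Fin.succ = tM z := by
  refine Matrix.ext fun r c => ?_
  simp only [vM, tM, submatrix_apply, Matrix.of_apply, Fin.val_succ]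
  all_goals first
  | rfl
  | exact congrArg₂ (· - ·) (if_congr (by omega) rfl rfl) (if_congr (by omega) rfl rfl)

lemma sub_aM (z : ℕ) : (aM (z+1)).submatrix Fin.succ Fin.succ = rM z := by
  refine Matrix.ext fun r c => ?_
  simp only [aM, rM, submatrix_apply, Matrix.of_apply, Fin.val_succ]
  all_goals first
  | rfl
  | exact congrArg₂ (· - ·) (if_congr (by omega) rfl rfl) (if_congr (by omega) rfl rfl)

lemma sub_aM' (z : ℕ) : (aM (z+1)).submatrix Fin.castSucc Fin.succ = tM z := by
  refine Matrix.ext fun r c => ?_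
  simp only [aM, tM, submatrix_apply, Matrix.of_apply, Fin.val_succ, Fin.coe_castSucc]
  all_goals first
  | rfl
  | exact congrArg₂ (· - ·) (if_congr (by omega) rfl rfl) (if_congr (by omega) rfl rfl)

lemma sub_rM (z : ℕ) : (rM (z+1)).submatrix Fin.castSucc Fin.castSucc = aM z := by
  refine Matrix.ext fun r c => ?_
  simp only [rM, aM, submatrix_apply, Matrix.of_apply, Fin.coe_castSucc]
  all_goals first
  | rfl
  | exact congrArg₂ (· - ·) (if_congr (by omega) rfl rfl) (if_congr (by omega) rfl rfl)

lemma sub_tM (z : ℕ) : (tM (z+1)).submatrix Fin.succ Fin.succ = uM z := by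
  refine Matrix.ext fun r c => ?_
  simp only [tM, uM, submatrix_apply, Matrix.of_apply, Fin.val_succ]
  all_goals first
  | rfl
  | exact congrArg₂ (· - ·) (if_congr (by omega) rfl rfl) (if_congr (by omega) rfl rfl)

lemma sub_tM' (z : ℕ) : (tM (z+1)).submatrix Fin.succ Fin.castSucc = aM z := by
  refine Matrix.ext fun r c => ?_
  simp only [tM, aM, submatrix_apply, Matrix.of_apply, Fin.val_succ, Fin.coe_castSucc]
  all_goals first
  | rfl
  | exact congrArg₂ (· - ·) (if_congr (by omega) rfl rfl) (if_congr (by omega) rfl rfl)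

lemma sub_uM (z : ℕ) : (uM (z+1)).submatrix Fin.castSucc Fin.castSucc = tM z := by
  refine Matrix.ext fun r c => ?_
  simp only [uM, tM, submatrix_apply, Matrix.of_apply, Fin.coe_castSucc]
  all_goals first
  | rfl
  | exact congrArg₂ (· - ·) (if_congr (by omega) rfl rfl) (if_congr (by omega) rfl rfl)

end Ext

lemma sum_two {N : ℕ} {R : Type*} [AddCommMonoid R] (f : Fin N → R) (a b : Fin N) (hab : a ≠ b)
    (h : ∀ i, i ≠ a → i ≠ b → f i = 0) : ∑ i, f i = f a + f b := by
  rw [← Finset.sum_subset (Finset.subset_univ {a, b}) (fun x _ hx => by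
    simp only [Finset.mem_insert, Finset.mem_singleton, not_or] at hx
    exact h x hx.1 hx.2)]
  exact Finset.sum_pair hab

lemma sum_one {N : ℕ} {R : Type*} [AddCommMonoid R] (f : Fin N → R) (a : Fin N)
    (h : ∀ i, i ≠ a → f i = 0) : ∑ i, f i = f a :=
  Finset.sum_eq_single_of_mem a (Finset.mem_univ a) (fun b _ hb => h b hb)

lemma det_vM (z : ℕ) : (vM (z+1)).det = -(tM z).det := by
  rw [Matrix.det_succ_row_zero]
  have hv : ∀ j : Fin (z+1), j ≠ 0 →
      (-1 : Polynomial ℤ) ^ (j:ℕ) * vM (z+1) 0 j *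
        ((vM (z+1)).submatrix Fin.succ j.succAbove).det = 0 := by
    intro j hj
    have hj' : (j:ℕ) ≠ 0 := fun h => hj (Fin.ext (by simp [h]))
    have hjl := j.isLt
    have h : vM (z+1) 0 j = 0 := by
      simp only [vM, Matrix.of_apply, Fin.val_zero]
      exact ev_zero (by first | omega | simp | decide) (by first | omega | simp | decide)
    rw [h]; ring
  rw [sum_one _ 0 hv]
  have h0 : vM (z+1) 0 0 = -1 := by
    simp only [vM, Matrix.of_apply, Fin.val_zero]
    exact ev_neg_one (by first | omega | simp | decide) (by first | omega | simp | decide)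
  rw [h0, Fin.succAbove_zero, sub_vM]
  simp

lemma det_uM (z : ℕ) : (uM (z+1)).det = -(tM z).det := by
  rw [Matrix.det_succ_column (uM (z+1)) (Fin.last z)]
  have hv : ∀ i : Fin (z+1), i ≠ Fin.last z →
      (-1 : Polynomial ℤ) ^ ((i:ℕ) + ((Fin.last z : Fin (z+1)):ℕ)) * uM (z+1) i (Fin.last z) *
        ((uM (z+1)).submatrix i.succAbove (Fin.last z).succAbove).det = 0 := by
    intro i hi
    have hi' : (i:ℕ) ≠ z := by simpa [Fin.ext_iff] using hi
    have hil := i.isLt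
    have h : uM (z+1) i (Fin.last z) = 0 := by
      simp only [uM, Matrix.of_apply, Fin.val_last]
      exact ev_zero (by first | omega | simp | decide) (by first | omega | simp | decide)
    rw [h]; ring
  rw [sum_one _ (Fin.last z) hv]
  have h0 : uM (z+1) (Fin.last z) (Fin.last z) = -1 := by
    simp only [uM, Matrix.of_apply, Fin.val_last]
    exact ev_neg_one (by first | omega | simp | decide) (by first | omega | simp | decide)
  rw [h0, Fin.succAbove_last, sub_uM, ← two_mul, pow_mul]
  norm_num

lemma det_rM (z : ℕ) : (rM (z+1)).det = X * (aM z).det := by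
  rw [Matrix.det_succ_row (rM (z+1)) (Fin.last z)]
  have hv : ∀ j : Fin (z+1), j ≠ Fin.last z →
      (-1 : Polynomial ℤ) ^ (((Fin.last z : Fin (z+1)):ℕ) + (j:ℕ)) * rM (z+1) (Fin.last z) j *
        ((rM (z+1)).submatrix (Fin.last z).succAbove j.succAbove).det = 0 := by
    intro j hj
    have hj' : (j:ℕ) ≠ z := by simpa [Fin.ext_iff] using hj
    have hjl := j.isLt
    have h : rM (z+1) (Fin.last z) j = 0 := by
      simp only [rM, Matrix.of_apply, Fin.val_last]
      exact ev_zero (by first | omega | simp | decide) (by first | omega | simp | decide)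
    rw [h]; ring
  rw [sum_one _ (Fin.last z) hv]
  have h0 : rM (z+1) (Fin.last z) (Fin.last z) = X := by
    simp only [rM, Matrix.of_apply, Fin.val_last]
    exact ev_X (by first | omega | simp | decide) (by first | omega | simp | decide)
  rw [h0, Fin.succAbove_last, sub_rM, ← two_mul, pow_mul]
  norm_num

lemma det_tM_rec (z : ℕ) : (tM (2*z+3)).det = (tM (2*z+1)).det - (aM (2*z+2)).det := by
  have e : (2*z+3) = (2*z+2)+1 := rfl
  rw [e, Matrix.det_succ_row_zero]
  have hv : ∀ j : Fin (2*z+2+1), j ≠ 0 → j ≠ Fin.last (2*z+2) →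
      (-1 : Polynomial ℤ) ^ (j:ℕ) * tM (2*z+2+1) 0 j *
        ((tM (2*z+2+1)).submatrix Fin.succ j.succAbove).det = 0 := by
    intro j hj hj2
    have hj' : (j:ℕ) ≠ 0 := fun h => hj (Fin.ext (by simp [h]))
    have hj2' : (j:ℕ) ≠ 2*z+2 := by simpa [Fin.ext_iff] using hj2
    have hjl := j.isLt
    have h : tM (2*z+2+1) 0 j = 0 := by
      simp only [tM, Matrix.of_apply, Fin.val_zero]
      exact ev_zero (by first | omega | simp | decide) (by first | omega | simp | decide)
    rw [h]; ring
  rw [sum_two _ 0 (Fin.last (2*z+2)) (by simp [Fin.ext_iff]) hv]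
  have h0 : tM (2*z+2+1) 0 0 = -1 := by
    simp only [tM, Matrix.of_apply, Fin.val_zero]
    exact ev_neg_one (by first | omega | simp | decide) (by first | omega | simp | decide)
  have hl : tM (2*z+2+1) 0 (Fin.last (2*z+2)) = -1 := by
    simp only [tM, Matrix.of_apply, Fin.val_zero, Fin.val_last]
    exact ev_neg_one (by first | omega | simp | decide) (by first | omega | simp | decide)
  rw [h0, hl, Fin.succAbove_zero, Fin.succAbove_last, sub_tM, sub_tM']
  have e2 : (2*z+2) = (2*z+1)+1 := rfl
  rw [show ((Fin.last (2*z+2) : Fin (2*z+2+1)):ℕ) = 2*z+2 from Fin.val_last _,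
    e2, det_uM, show (2*z+1+1) = 2*(z+1) from by ring, pow_mul]
  norm_num
  ring

lemma det_aM_rec (z : ℕ) : (aM (2*z+4)).det = X^2 * (aM (2*z+2)).det + (tM (2*z+3)).det := by
  have e : (2*z+4) = (2*z+3)+1 := rfl
  rw [e, Matrix.det_succ_column_zero]
  have hv : ∀ i : Fin (2*z+3+1), i ≠ 0 → i ≠ Fin.last (2*z+3) →
      (-1 : Polynomial ℤ) ^ (i:ℕ) * aM (2*z+3+1) i 0 *
        ((aM (2*z+3+1)).submatrix i.succAbove Fin.succ).det = 0 := by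
    intro i hi hi2
    have hi' : (i:ℕ) ≠ 0 := fun h => hi (Fin.ext (by simp [h]))
    have hi2' : (i:ℕ) ≠ 2*z+3 := by simpa [Fin.ext_iff] using hi2
    have hil := i.isLt
    have h : aM (2*z+3+1) i 0 = 0 := by
      simp only [aM, Matrix.of_apply, Fin.val_zero]
      exact ev_zero (by first | omega | simp | decide) (by first | omega | simp | decide)
    rw [h]; ring
  rw [sum_two _ 0 (Fin.last (2*z+3)) (by simp [Fin.ext_iff]) hv]
  have h0 : aM (2*z+3+1) 0 0 = X := by
    simp only [aM, Matrix.of_apply, Fin.val_zero]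
    exact ev_X (by first | omega | simp | decide) (by first | omega | simp | decide)
  have hl : aM (2*z+3+1) (Fin.last (2*z+3)) 0 = -1 := by
    simp only [aM, Matrix.of_apply, Fin.val_zero, Fin.val_last]
    exact ev_neg_one (by first | omega | simp | decide) (by first | omega | simp | decide)
  rw [h0, hl, Fin.succAbove_zero, Fin.succAbove_last, sub_aM, sub_aM']
  have e2 : (2*z+3) = (2*z+2)+1 := rfl
  rw [show ((Fin.last (2*z+3) : Fin (2*z+3+1)):ℕ) = 2*z+3 from Fin.val_last _,
    e2, det_rM, show (2*z+2+1) = 2*(z+1)+1 from by ring, pow_succ, pow_mul]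
  norm_num
  ring

lemma det_bM_rec (z : ℕ) : (bM (2*z+4)).det = (X-1) * (aM (2*z+4)).det + (tM (2*z+3)).det := by
  rw [Matrix.det_succ_column_zero]
  have hv : ∀ i : Fin (2*z+4+1), i ≠ 0 → i ≠ Fin.last (2*z+4) →
      (-1 : Polynomial ℤ) ^ (i:ℕ) * bM (2*z+4) i 0 *
        ((bM (2*z+4)).submatrix i.succAbove Fin.succ).det = 0 := by
    intro i hi hi2
    have hi' : (i:ℕ) ≠ 0 := fun h => hi (Fin.ext (by simp [h]))
    have hi2' : (i:ℕ) ≠ 2*z+4 := by simpa [Fin.ext_iff] using hi2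
    have hil := i.isLt
    have h : bM (2*z+4) i 0 = 0 := by
      simp only [bM, Matrix.of_apply, Fin.val_zero]
      exact ev_zero (by first | omega | simp | decide) (by first | omega | simp | decide)
    rw [h]; ring
  rw [sum_two _ 0 (Fin.last (2*z+4)) (by simp [Fin.ext_iff]) hv]
  have h0 : bM (2*z+4) 0 0 = X - 1 := by
    simp only [bM, Matrix.of_apply, Fin.val_zero]
    exact ev_X_sub_one (by first | omega | simp | decide) (by first | omega | simp | decide)
  have hl : bM (2*z+4) (Fin.last (2*z+4)) 0 = -1 := by
    simp only [bM, Matrix.of_apply, Fin.val_zero, Fin.val_last]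
    exact ev_neg_one (by first | omega | simp | decide) (by first | omega | simp | decide)
  rw [h0, hl, Fin.succAbove_zero, Fin.succAbove_last, sub_bM, sub_bM']
  have e2 : (2*z+4) = (2*z+3)+1 := rfl
  rw [show ((Fin.last (2*z+4) : Fin (2*z+4+1)):ℕ) = 2*z+4 from Fin.val_last _,
    e2, det_vM, show (2*z+3+1) = 2*(z+2) from by ring, pow_mul]
  norm_num

lemma det_tM_one : (tM 1).det = -1 := by
  rw [Matrix.det_fin_one]
  simp only [tM, Matrix.of_apply, Fin.val_zero]
  exact ev_neg_one (by first | omega | simp | decide) (by first | omega | simp | decide)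

lemma det_aM_two : (aM 2).det = X^2 - 1 := by
  rw [Matrix.det_fin_two]
  have h00 : aM 2 0 0 = X := by
    simp only [aM, Matrix.of_apply, Fin.val_zero]
    exact ev_X (by first | omega | simp | decide) (by first | omega | simp | decide)
  have h01 : aM 2 0 1 = -1 := by
    simp only [aM, Matrix.of_apply, Fin.val_zero, Fin.val_one]
    exact ev_neg_one (by first | omega | simp | decide) (by first | omega | simp | decide)
  have h10 : aM 2 1 0 = -1 := by
    simp only [aM, Matrix.of_apply, Fin.val_zero, Fin.val_one]
    exact ev_neg_one (by first | omega | simp | decide) (by first | omega | simp | decide)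
  have h11 : aM 2 1 1 = X := by
    simp only [aM, Matrix.of_apply, Fin.val_one]
    exact ev_X (by first | omega | simp | decide) (by first | omega | simp | decide)
  rw [h00, h01, h10, h11]; ring

noncomputable def Qs (m : ℕ) : Polynomial ℤ :=
  ∑ k ∈ Finset.range (m+1), (-1)^k * (Nat.choose (m+1-k) k : Polynomial ℤ) * X^(2*m-2*k)

noncomputable def Ts (m : ℕ) : Polynomial ℤ :=
  ∑ k ∈ Finset.range (m+1), (-1)^k * (Nat.choose (m-k) k : Polynomial ℤ) * X^(2*m-2*k)

lemma key1 (m : ℕ) : Qs (m+1) = Ts (m+1) - Ts m := by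
  have h : Qs (m+1) - Ts (m+1) = -Ts m := by
    unfold Qs Ts
    rw [← Finset.sum_sub_distrib, Finset.sum_range_succ', ← Finset.sum_neg_distrib]
    have h0 : (-1:Polynomial ℤ)^0 * (Nat.choose (m+1+1-0) 0 : Polynomial ℤ) * X^(2*(m+1)-2*0)
        - (-1)^0 * (Nat.choose (m+1-0) 0 : Polynomial ℤ) * X^(2*(m+1)-2*0) = 0 := by
      simp
    rw [h0, add_zero]
    refine Finset.sum_congr rfl fun k hk => ?_
    simp only [Finset.mem_range] at hk
    have e1 : m+1+1-(k+1) = (m-k)+1 := by omega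
    have e2 : m+1-(k+1) = m-k := by omega
    have e3 : 2*(m+1)-2*(k+1) = 2*m-2*k := by omega
    rw [e1, e2, e3, Nat.choose_succ_succ]
    push_cast
    ring
  linear_combination h

lemma key2 (m : ℕ) : Ts (m+2) = X^2 * Qs (m+1) := by
  unfold Qs Ts
  rw [Finset.sum_range_succ, Finset.mul_sum]
  have h0 : (-1:Polynomial ℤ)^(m+2) * (Nat.choose (m+2-(m+2)) (m+2) : Polynomial ℤ)
      * X^(2*(m+2)-2*(m+2)) = 0 := by
    rw [Nat.sub_self, Nat.choose_eq_zero_of_lt (by omega)]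
    simp
  rw [h0, add_zero]
  refine Finset.sum_congr rfl fun k hk => ?_
  simp only [Finset.mem_range] at hk
  have e1 : m+2-k = m+1+1-k := by omega
  have e2 : 2*(m+2)-2*k = 2+(2*(m+1)-2*k) := by omega
  rw [e1, e2, pow_add]
  ring

lemma QT (m : ℕ) : (aM (2*m+2)).det = Qs (m+1) ∧ (tM (2*m+1)).det = -Ts m := by
  induction m with
  | zero =>
    constructor
    · rw [show 2*0+2 = 2 from rfl, det_aM_two]
      unfold Qs
      simp [Finset.sum_range_succ]
      try ring
    · rw [show 2*0+1 = 1 from rfl, det_tM_one]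
      unfold Ts
      simp
  | succ k ih =>
    have ht : (tM (2*(k+1)+1)).det = -Ts (k+1) := by
      rw [show 2*(k+1)+1 = 2*k+3 from by ring, det_tM_rec, ih.2, ih.1, key1]
      ring
    refine ⟨?_, ht⟩
    rw [show 2*(k+1)+2 = 2*k+4 from by ring, det_aM_rec, ih.1,
      show 2*k+3 = 2*(k+1)+1 from by ring, ht, ← key2, key1 (k+1)]
    ring

lemma charpoly_eq (z : ℕ) : (adjB (2*z+4)).charpoly = X * Qs (z+2) - Ts (z+2) := by
  have h1 : (adjB (2*z+4)).charpoly = (bM (2*z+4)).det := by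
    rw [Matrix.charpoly, charmatrix_adjB]
  rw [h1, det_bM_rec,
    show (2*z+4 : ℕ) = 2*(z+1)+2 from by ring, (QT (z+1)).1,
    show (2*z+3 : ℕ) = 2*(z+1)+1 from by ring, (QT (z+1)).2, key1 (z+1)]
  ring


/-- Lemma 4.4, even case: explicit form of the characteristic polynomial
`det (λ I - B_n)` for even `n ≥ 4`.  The binomial coefficient `C(a, k-2)` is
zero for `k = 1` (a "negative" lower index), which is encoded by the guard
`2 ≤ k`. -/
theorem charpoly_adjB_even (n : ℕ) (hn : 4 ≤ n) (hev : Even n) :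
    (adjB n).charpoly =
      ∑ k ∈ Finset.Icc 1 ((n + 3) / 4 + 2),
        (-1 : Polynomial ℤ) ^ (k - 1) *
          ((Nat.choose (n / 2 + 2 - k) (k - 1) : Polynomial ℤ) +
            (if 2 ≤ k then
              (Nat.choose (n / 2 + 2 - k) (k - 2) : Polynomial ℤ) else 0) *
              Polynomial.X) *
            Polynomial.X ^ (n + 3 - 2 * k) := by
  
  obtain ⟨z, rfl⟩ : ∃ z, n = 2*z+4 := by
    obtain ⟨w, hw⟩ := hev
    exact ⟨(n-4)/2, by omega⟩
  rw [charpoly_eq z]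
  -- the summand
  set F : ℕ → Polynomial ℤ := fun k =>
    (-1 : Polynomial ℤ) ^ (k - 1) *
      ((Nat.choose ((2*z+4) / 2 + 2 - k) (k - 1) : Polynomial ℤ) +
        (if 2 ≤ k then
          (Nat.choose ((2*z+4) / 2 + 2 - k) (k - 2) : Polynomial ℤ) else 0) *
          Polynomial.X) *
        Polynomial.X ^ (2*z+4 + 3 - 2 * k) with hF
  have hext : ∑ k ∈ Finset.Icc 1 ((2*z+4 + 3) / 4 + 2), F k = ∑ k ∈ Finset.Icc 1 (z+4), F k := by
    refine Finset.sum_subset (fun k hk => ?_) (fun k hk hnk => ?_)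
    · simp only [Finset.mem_Icc] at hk ⊢
      omega
    · simp only [Finset.mem_Icc] at hk hnk
      have hk1 : (2*z+4+3)/4 + 2 < k := by omega
      have hc1 : (2*z+4)/2 + 2 - k < k - 1 := by omega
      have hc2 : (2*z+4)/2 + 2 - k < k - 2 := by omega
      rw [hF]
      simp only [Nat.choose_eq_zero_of_lt hc1, Nat.choose_eq_zero_of_lt hc2, Nat.cast_zero,
        ite_self, zero_mul, zero_add, mul_zero]
  rw [hext, ← Finset.Ico_add_one_right_eq_Icc, Finset.sum_Ico_eq_sum_range,
    show (z+4+1-1) = z+4 from by omega]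
  -- split each term
  set t1 : ℕ → Polynomial ℤ := fun j =>
    (-1 : Polynomial ℤ)^j * (Nat.choose (z+3-j) j : Polynomial ℤ) * X^(2*z+5-2*j) with ht1
  set t2 : ℕ → Polynomial ℤ := fun j =>
    (-1 : Polynomial ℤ)^j * (if 1 ≤ j then (Nat.choose (z+3-j) (j-1) : Polynomial ℤ) else 0)
      * X^(2*z+6-2*j) with ht2
  have hsplit : ∑ j ∈ Finset.range (z+4), F (1+j)
      = (∑ j ∈ Finset.range (z+4), t1 j) + (∑ j ∈ Finset.range (z+4), t2 j) := by
    rw [← Finset.sum_add_distrib]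
    refine Finset.sum_congr rfl fun j hj => ?_
    simp only [Finset.mem_range] at hj
    rw [hF, ht1, ht2]
    simp only []
    have e0 : 1 + j - 1 = j := by omega
    have e1 : (2*z+4)/2 + 2 - (1+j) = z+3-j := by omega
    have e2 : 1 + j - 2 = j - 1 := by omega
    have eif : (2 ≤ 1 + j) = (1 ≤ j) := by
      apply propext; omega
    rw [e0, e1, e2]
    simp only [eif]
    by_cases hj2 : j ≤ z + 2
    · have e3 : 2*z+4+3 - 2*(1+j) = 2*z+5-2*j := by omega
      have e4 : 2*z+6-2*j = (2*z+5-2*j) + 1 := by omega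
      rw [e3, e4, pow_succ]
      ring
    · have hj3 : j = z + 3 := by omega
      subst hj3
      have c1 : z+3-(z+3) = 0 := by omega
      rw [c1, Nat.choose_eq_zero_of_lt (by omega), Nat.choose_eq_zero_of_lt (by omega)]
      simp
  rw [hsplit]
  have h1 : ∑ j ∈ Finset.range (z+4), t1 j = X * Qs (z+2) := by
    rw [Finset.sum_range_succ, ht1]
    simp only []
    rw [show z+3-(z+3) = 0 from by omega, Nat.choose_eq_zero_of_lt (by omega), Nat.cast_zero,
      mul_zero, zero_mul, add_zero]
    unfold Qs
    rw [Finset.mul_sum]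
    refine Finset.sum_congr rfl fun k hk => ?_
    simp only [Finset.mem_range] at hk
    rw [show 2*z+5-2*k = (2*(z+2)-2*k)+1 from by omega, show z+2+1-k = z+3-k from by omega,
      pow_succ]
    ring
  have h2 : ∑ j ∈ Finset.range (z+4), t2 j = -Ts (z+2) := by
    rw [Finset.sum_range_succ', ht2]
    simp only []
    rw [if_neg (by omega), mul_zero, zero_mul, add_zero]
    unfold Ts
    rw [← Finset.sum_neg_distrib]
    refine Finset.sum_congr rfl fun k hk => ?_
    simp only [Finset.mem_range] at hk
    rw [if_pos (by omega), show z+3-(k+1) = z+2-k from by omega, show k+1-1 = k from by omega,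
      show 2*z+6-2*(k+1) = 2*(z+2)-2*k from by omega]
    ring
  rw [h1, h2]
  ring
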